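/- Let A, B ⊆ ℕ and let γ be a (2, B)-divisible numbering. If for every total A-computable binary function h: ℕ × ℕ → ℕ there is a total B-computable function f: ℕ → ℕ such that h(n, f(n)) ∼_γ f(n) for all n, then A is Turing reducible to B (A ≤_T B). -/

import Mathlib

open Nat Part

/-- Partial functions on `ℕ` computable relative to an oracle set `A`. -/
inductive OracleRecursiveIn (A : Set ℕ) : (ℕ →. ℕ) → Prop
  | zero : OracleRecursiveIn A (pure 0)
  | succ : OracleRecursiveIn A ↑Nat.succ
  | left : OracleRecursiveIn A ↑fun n : ℕ => n.unpair.1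
  | right : OracleRecursiveIn A ↑fun n : ℕ => n.unpair.2
  | oracle : OracleRecursiveIn A ↑fun n : ℕ => A.indicator 1 n
  | pair {f g} : OracleRecursiveIn A f → OracleRecursiveIn A g →
      OracleRecursiveIn A fun n => Nat.pair <$> f n <*> g n
  | comp {f g} : OracleRecursiveIn A f → OracleRecursiveIn A g →
      OracleRecursiveIn A fun n => g n >>= f
  | prec {f g} : OracleRecursiveIn A f → OracleRecursiveIn A g →
      OracleRecursiveIn A (Nat.unpaired fun a n =>
        n.rec (f a) fun y IH => do let i ← IH; g (Nat.pair a (Nat.pair y i)))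
  | rfind {f} : OracleRecursiveIn A f →
      OracleRecursiveIn A fun a => Nat.rfind fun n => (fun m => m = 0) <$> f (Nat.pair a n)

/-- A total function `f : ℕ → ℕ` is `A`-computable. -/
def OracleComputableIn (A : Set ℕ) (f : ℕ → ℕ) : Prop :=
  OracleRecursiveIn A fun n => Part.some (f n)

/-- A total binary function is `A`-computable. -/
def OracleComputableIn₂ (A : Set ℕ) (h : ℕ → ℕ → ℕ) : Prop :=
  OracleComputableIn A fun n => h n.unpair.1 n.unpair.2

/-- The characteristic function of a set of naturals. -/
noncomputable def chi (A : Set ℕ) : ℕ → ℕ := A.indicator 1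

/-- Turing reducibility: `A ≤_T B`. -/
def TuringLE (A B : Set ℕ) : Prop := OracleComputableIn B (chi A)

/-- `A` is computable. -/
def SetComputable (A : Set ℕ) : Prop := OracleComputableIn ∅ (chi A)

/-- `X` is computably enumerable in `A`: `X` is the domain of a partial
`A`-computable function. -/
def CEIn (A : Set ℕ) (X : Set ℕ) : Prop :=
  ∃ p : ℕ →. ℕ, OracleRecursiveIn A p ∧ X = p.Dom

/-- `A ≤_γ B` (`A` is `(γ,B)`-low): every total `A`-computable function has a
`B`-computable `γ`-lift. -/
def GammaLE (γ : ℕ → ℕ → Prop) (A B : Set ℕ) : Prop :=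
  ∀ f : ℕ → ℕ, OracleComputableIn A f →
    ∃ g : ℕ → ℕ, OracleComputableIn B g ∧ ∀ n, γ (f n) (g n)

/-- `A` is `γ`-low: `A ≤_γ ∅`. -/
def GammaLow (γ : ℕ → ℕ → Prop) (A : Set ℕ) : Prop := GammaLE γ A ∅

/-- `γ` is `(n, A)`-divisible (for finite `n`). -/
def DivisibleFin (γ : ℕ → ℕ → Prop) (n : ℕ) (A : Set ℕ) : Prop :=
  ∃ (x : Fin n → ℕ) (X : Fin n → Set ℕ),
    (∀ i, CEIn A (X i)) ∧
    (∀ i, {m | γ (x i) m} ⊆ X i) ∧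
    (∀ i j, i ≠ j → {m | γ (x i) m} ∩ X j = ∅)

/-- `γ` is `(ω, A)`-divisible. -/
def DivisibleOmega (γ : ℕ → ℕ → Prop) (A : Set ℕ) : Prop :=
  ∃ (x : ℕ → ℕ) (X : ℕ → Set ℕ),
    OracleComputableIn A x ∧
    CEIn A {k : ℕ | k.unpair.2 ∈ X k.unpair.1} ∧
    (∀ i, {m | γ (x i) m} ⊆ X i) ∧
    (∀ i j, i ≠ j → {m | γ (x i) m} ∩ X j = ∅)

/-- `γ` is `A`-precomplete: every partial `A`-computable function has a total
`A`-computable totalization modulo `γ`. -/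
def PrecompleteIn (γ : ℕ → ℕ → Prop) (A : Set ℕ) : Prop :=
  ∀ ψ : ℕ →. ℕ, OracleRecursiveIn A ψ →
    ∃ f : ℕ → ℕ, OracleComputableIn A f ∧ ∀ n, ∀ y ∈ ψ n, γ y (f n)

/-- `γ` is a c.e. numbering. -/
def CENumbering (γ : ℕ → ℕ → Prop) : Prop :=
  CEIn ∅ {k : ℕ | γ k.unpair.1 k.unpair.2}

/-- The `e`-th partial computable function. -/
def phi (e : ℕ) : ℕ →. ℕ := (Denumerable.ofNat Nat.Partrec.Code e).eval

/-- The `e`-th computably enumerable set. -/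
def Wset (e : ℕ) : Set ℕ := (phi e).Dom

/-- The halting set `∅'`. -/
def halting : Set ℕ := {e : ℕ | (phi e e).Dom}

section S18
variable (B : Set ℕ)

/-- reversed list of oracle answers `[χ(l-1), ..., χ(0)]`. -/
noncomputable def revList : ℕ → List ℕ
  | 0 => []
  | l + 1 => B.indicator 1 l :: revList l

/-- code of the oracle string of length `l`. -/
noncomputable def cB (l : ℕ) : ℕ := Encodable.encode (revList B l)

theorem revList_length (l : ℕ) : (revList B l).length = l := by
  induction l with
  | zero => rfl
  | succ l ih => simp [revList, ih]

theorem revList_reverse_get? {n l : ℕ} (h : n < l) :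
    (revList B l).reverse[n]? = Option.some (B.indicator 1 n) := by
  induction l with
  | zero => omega
  | succ l ih =>
    rcases Nat.lt_succ_iff_lt_or_eq.1 h with h' | h'
    · rw [revList, List.reverse_cons, List.getElem?_append_left]
      · exact ih h'
      · simpa [revList_length] using h'
    · subst h'
      rw [revList, List.reverse_cons]
      have hlen : (revList B n).reverse.length = n := by simp [revList_length]
      rw [List.getElem?_append_right (le_of_eq hlen)]
      simp [hlen]

/-- oracle-string lookup. -/
def lk : ℕ →. ℕ :=
  fun m => Part.ofOption ((Denumerable.ofNat (List ℕ) m.unpair.1).reverse[m.unpair.2]?)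

theorem lk_partrec : Nat.Partrec lk := by
  have h : Computable fun m : ℕ =>
      (Denumerable.ofNat (List ℕ) m.unpair.1).reverse[m.unpair.2]? := by
    have h1 : Primrec fun m : ℕ => (Denumerable.ofNat (List ℕ) m.unpair.1).reverse :=
      Primrec.list_reverse.comp ((Primrec.ofNat (List ℕ)).comp
        (Primrec.fst.comp Primrec.unpair))
    exact (Primrec.list_getElem?.comp h1 (Primrec.snd.comp Primrec.unpair)).to_comp
  exact Partrec.nat_iff.1 h.ofOption

theorem lk_correct {l n y : ℕ} (h : y ∈ lk (Nat.pair (cB B l) n)) :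
    y = B.indicator 1 n := by
  simp only [lk, Nat.unpair_pair, cB, Denumerable.ofNat_encode, Part.mem_ofOption] at h
  by_cases hn : n < l
  · rw [revList_reverse_get? B hn] at h; exact (Option.mem_some_iff.1 h).symm
  · rw [List.getElem?_eq_none_iff.2 (by simp [revList_length]; omega)] at h
    exact absurd h (by simp)

theorem lk_complete {n l : ℕ} (h : n + 1 ≤ l) :
    B.indicator 1 n ∈ lk (Nat.pair (cB B l) n) := by
  simp only [lk, Nat.unpair_pair, cB, Denumerable.ofNat_encode, Part.mem_ofOption]
  rw [revList_reverse_get? B (by omega)]; rfl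


/-- rearrangement `pair A (pair y i) ↦ pair A.1 (pair A.2 (pair y i))`. -/
def rearr (z : ℕ) : ℕ :=
  Nat.pair z.unpair.1.unpair.1 (Nat.pair z.unpair.1.unpair.2 z.unpair.2)

theorem rearr_primrec : Nat.Primrec rearr := by
  have : Primrec rearr :=
    Primrec₂.natPair.comp
      (Primrec.fst.comp (Primrec.unpair.comp (Primrec.fst.comp Primrec.unpair)))
      (Primrec₂.natPair.comp
        (Primrec.snd.comp (Primrec.unpair.comp (Primrec.fst.comp Primrec.unpair)))
        (Primrec.snd.comp Primrec.unpair))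
  exact Primrec.nat_iff.1 this

/-- rearrangement `pair σ (pair a n) ↦ pair (pair σ a) n`. -/
def rearr2 (m : ℕ) : ℕ :=
  Nat.pair (Nat.pair m.unpair.1 m.unpair.2.unpair.1) m.unpair.2.unpair.2

theorem rearr2_primrec : Nat.Primrec rearr2 := by
  have : Primrec rearr2 :=
    Primrec₂.natPair.comp
      (Primrec₂.natPair.comp (Primrec.fst.comp Primrec.unpair)
        (Primrec.fst.comp (Primrec.unpair.comp (Primrec.snd.comp Primrec.unpair))))
      (Primrec.snd.comp (Primrec.unpair.comp (Primrec.snd.comp Primrec.unpair)))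
  exact Primrec.nat_iff.1 this

theorem oracle_eq (B : Set ℕ) :
    (↑fun n : ℕ => B.indicator 1 n : ℕ →. ℕ) = fun n => Part.some (B.indicator 1 n) := by
  funext n
  by_cases h : n ∈ B <;> simp [Set.indicator, h] <;> rfl

theorem mem_pairSeq {x y : Part ℕ} {v : ℕ} :
    v ∈ (Nat.pair <$> x <*> y) ↔ ∃ a ∈ x, ∃ b ∈ y, Nat.pair a b = v := by
  simp [Seq.seq, Part.mem_bind_iff, Part.mem_map_iff]

theorem some_bind_pfun (a : ℕ) (p : ℕ →. ℕ) : (Part.some a >>= p) = p a :=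
  Part.bind_some a p

theorem approx {B : Set ℕ} {p : ℕ →. ℕ} (hp : OracleRecursiveIn B p) :
    ∃ q : ℕ →. ℕ, Nat.Partrec q ∧
      (∀ l n y, y ∈ q (Nat.pair (cB B l) n) → y ∈ p n) ∧
      (∀ n y, y ∈ p n → ∃ L, ∀ l, L ≤ l → y ∈ q (Nat.pair (cB B l) n)) := by
  induction hp with
  | zero =>
    exact ⟨pure 0, Nat.Partrec.zero, fun l n y h => h, fun n y h => ⟨0, fun l _ => h⟩⟩
  | succ =>
    refine ⟨fun m => (↑(fun n : ℕ => n.unpair.2) : ℕ →. ℕ) m >>= (↑Nat.succ : ℕ →. ℕ),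
      Nat.Partrec.comp Nat.Partrec.succ Nat.Partrec.right, fun l n y h => ?_,
      fun n y h => ⟨0, fun l _ => ?_⟩⟩
    · simpa [PFun.coe_val, some_bind_pfun, Part.bind_some, Nat.unpair_pair] using h
    · simpa [PFun.coe_val, some_bind_pfun, Part.bind_some, Nat.unpair_pair] using h
  | left =>
    refine ⟨fun m => (↑(fun n : ℕ => n.unpair.2) : ℕ →. ℕ) m >>=
        (↑(fun n : ℕ => n.unpair.1) : ℕ →. ℕ),
      Nat.Partrec.comp Nat.Partrec.left Nat.Partrec.right, fun l n y h => ?_,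
      fun n y h => ⟨0, fun l _ => ?_⟩⟩
    · simpa [PFun.coe_val, some_bind_pfun, Part.bind_some, Nat.unpair_pair] using h
    · simpa [PFun.coe_val, some_bind_pfun, Part.bind_some, Nat.unpair_pair] using h
  | right =>
    refine ⟨fun m => (↑(fun n : ℕ => n.unpair.2) : ℕ →. ℕ) m >>=
        (↑(fun n : ℕ => n.unpair.2) : ℕ →. ℕ),
      Nat.Partrec.comp Nat.Partrec.right Nat.Partrec.right, fun l n y h => ?_,
      fun n y h => ⟨0, fun l _ => ?_⟩⟩
    · simpa [PFun.coe_val, some_bind_pfun, Part.bind_some, Nat.unpair_pair] using h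
    · simpa [PFun.coe_val, some_bind_pfun, Part.bind_some, Nat.unpair_pair] using h
  | oracle =>
    refine ⟨lk, lk_partrec, fun l n y h => ?_, fun n y h => ⟨n + 1, fun l hl => ?_⟩⟩
    · rw [oracle_eq]
      exact Part.mem_some_iff.2 (lk_correct B h)
    · rw [oracle_eq] at h
      rw [Part.mem_some_iff.1 h]
      exact lk_complete B hl
  | @pair f g _ _ ihf ihg =>
    obtain ⟨qf, hqf, cf, df⟩ := ihf
    obtain ⟨qg, hqg, cg, dg⟩ := ihg
    refine ⟨fun m => Nat.pair <$> qf m <*> qg m, Nat.Partrec.pair hqf hqg,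
      fun l n y h => ?_, fun n y h => ?_⟩
    · obtain ⟨a, ha, b, hb, rfl⟩ := mem_pairSeq.1 h
      exact mem_pairSeq.2 ⟨a, cf l n a ha, b, cg l n b hb, rfl⟩
    · obtain ⟨a, ha, b, hb, rfl⟩ := mem_pairSeq.1 h
      obtain ⟨La, hLa⟩ := df n a ha
      obtain ⟨Lb, hLb⟩ := dg n b hb
      refine ⟨max La Lb, fun l hl => ?_⟩
      exact mem_pairSeq.2 ⟨a, hLa l (le_trans (le_max_left _ _) hl), b,
        hLb l (le_trans (le_max_right _ _) hl), rfl⟩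
  | @comp f g _ _ ihf ihg =>
    obtain ⟨qf, hqf, cf, df⟩ := ihf
    obtain ⟨qg, hqg, cg, dg⟩ := ihg
    refine ⟨fun m => (Nat.pair <$> (↑(fun x : ℕ => x.unpair.1) : ℕ →. ℕ) m <*> qg m) >>= qf,
      Nat.Partrec.comp hqf (Nat.Partrec.pair Nat.Partrec.left hqg),
      fun l n y h => ?_, fun n y h => ?_⟩
    · obtain ⟨z, hz, hy⟩ := Part.mem_bind_iff.1 h
      obtain ⟨a, ha, i, hi, rfl⟩ := mem_pairSeq.1 hz
      have ha' : a = cB B l := by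
        simpa [PFun.coe_val, Part.mem_some_iff, Nat.unpair_pair] using ha
      subst ha'
      exact Part.mem_bind_iff.2 ⟨i, cg l n i hi, cf l i y hy⟩
    · obtain ⟨i, hi, hy⟩ := Part.mem_bind_iff.1 h
      obtain ⟨Lg, hLg⟩ := dg n i hi
      obtain ⟨Lf, hLf⟩ := df i y hy
      refine ⟨max Lg Lf, fun l hl => ?_⟩
      refine Part.mem_bind_iff.2 ⟨Nat.pair (cB B l) i, mem_pairSeq.2 ⟨cB B l, ?_, i,
        hLg l (le_trans (le_max_left _ _) hl), rfl⟩,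
        hLf l (le_trans (le_max_right _ _) hl)⟩
      simp [PFun.coe_val, Part.mem_some_iff, Nat.unpair_pair]
  | @prec f g _ _ ihf ihg =>
    obtain ⟨qf, hqf, cf, df⟩ := ihf
    obtain ⟨qg, hqg, cg, dg⟩ := ihg
    set G : ℕ →. ℕ := fun z => (↑rearr : ℕ →. ℕ) z >>= qg with hG
    have hGp : Nat.Partrec G := Nat.Partrec.comp hqg (Nat.Partrec.of_primrec rearr_primrec)
    set P0 : ℕ →. ℕ := Nat.unpaired fun a n =>
      n.rec (qf a) fun y IH => do let i ← IH; G (Nat.pair a (Nat.pair y i)) with hP0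
    have hP0p : Nat.Partrec P0 := Nat.Partrec.prec hqf hGp
    refine ⟨fun m => (↑rearr2 : ℕ →. ℕ) m >>= P0,
      Nat.Partrec.comp hP0p (Nat.Partrec.of_primrec rearr2_primrec),
      fun l n y h => ?_, fun n y h => ?_⟩
    · -- correctness
      have key : ∀ (a m y : ℕ), y ∈ (m.rec (qf (Nat.pair (cB B l) a))
          (fun k IH => IH >>= fun i => G (Nat.pair (Nat.pair (cB B l) a) (Nat.pair k i)))
            : Part ℕ) →
          y ∈ (m.rec (f a)
            (fun k IH => IH >>= fun i => g (Nat.pair a (Nat.pair k i))) : Part ℕ) := by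
        intro a m
        induction m with
        | zero => exact fun y hy => cf l a y hy
        | succ m ih =>
          intro y hy
          obtain ⟨i, hi, hy⟩ := Part.mem_bind_iff.1 hy
          have hy' : y ∈ qg (Nat.pair (cB B l) (Nat.pair a (Nat.pair m i))) := by
            simpa [some_bind_pfun, Part.bind_some, hG, rearr, Nat.unpair_pair] using hy
          exact Part.mem_bind_iff.2 ⟨i, ih i hi, cg l _ y hy'⟩
      have hmem : y ∈ P0 (Nat.pair (Nat.pair (cB B l) n.unpair.1) n.unpair.2) := by
        simpa [some_bind_pfun, Part.bind_some, rearr2, Nat.unpair_pair] using h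
      have := key n.unpair.1 n.unpair.2 y (by simpa [hP0, Nat.unpaired, Nat.unpair_pair] using hmem)
      simpa [Nat.unpaired, Nat.pair_unpair] using this
    · -- completeness
      have key : ∀ (a m y : ℕ), y ∈ (m.rec (f a)
            (fun k IH => IH >>= fun i => g (Nat.pair a (Nat.pair k i))) : Part ℕ) →
          ∃ L, ∀ l, L ≤ l → y ∈ (m.rec (qf (Nat.pair (cB B l) a))
            (fun k IH => IH >>= fun i => G (Nat.pair (Nat.pair (cB B l) a) (Nat.pair k i)))
              : Part ℕ) := by
        intro a m
        induction m with
        | zero => exact fun y hy => df a y hy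
        | succ m ih =>
          intro y hy
          obtain ⟨i, hi, hy⟩ := Part.mem_bind_iff.1 hy
          obtain ⟨L1, hL1⟩ := ih i hi
          obtain ⟨L2, hL2⟩ := dg _ y hy
          refine ⟨max L1 L2, fun l hl => ?_⟩
          refine Part.mem_bind_iff.2 ⟨i, hL1 l (le_trans (le_max_left _ _) hl), ?_⟩
          simpa [some_bind_pfun, Part.bind_some, hG, rearr, Nat.unpair_pair] using hL2 l (le_trans (le_max_right _ _) hl)
      obtain ⟨L, hL⟩ := key n.unpair.1 n.unpair.2 y
        (by simpa [Nat.unpaired, Nat.pair_unpair] using h)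
      refine ⟨L, fun l hl => ?_⟩
      simpa [rearr2, Nat.unpair_pair, hP0, Nat.unpaired] using hL l hl
  | @rfind f _ ihf =>
    obtain ⟨qf, hqf, cf, df⟩ := ihf
    set F : ℕ →. ℕ := fun z => (↑rearr : ℕ →. ℕ) z >>= qf with hF
    have hFp : Nat.Partrec F := Nat.Partrec.comp hqf (Nat.Partrec.of_primrec rearr_primrec)
    refine ⟨fun a => Nat.rfind fun n => (fun m => m = 0) <$> F (Nat.pair a n),
      Nat.Partrec.rfind hFp, fun l a y h => ?_, fun a y h => ?_⟩
    · -- correctness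
      have hspec := Nat.rfind_spec h
      have hmin := fun {m} (hm : m < y) => Nat.rfind_min h hm
      refine Nat.mem_rfind.2 ⟨?_, fun {m} hm => ?_⟩
      · obtain ⟨v, hv, hv0⟩ := (Part.mem_map_iff _).1 hspec
        have hv' : v ∈ qf (Nat.pair (cB B l) (Nat.pair a y)) := by
          simpa [some_bind_pfun, Part.bind_some, hF, rearr, Nat.unpair_pair] using hv
        exact (Part.mem_map_iff _).2 ⟨v, cf l _ v hv', hv0⟩
      · obtain ⟨v, hv, hv0⟩ := (Part.mem_map_iff _).1 (hmin hm)
        have hv' : v ∈ qf (Nat.pair (cB B l) (Nat.pair a m)) := by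
          simpa [some_bind_pfun, Part.bind_some, hF, rearr, Nat.unpair_pair] using hv
        exact (Part.mem_map_iff _).2 ⟨v, cf l _ v hv', hv0⟩
    · -- completeness
      have hspec := Nat.rfind_spec h
      have hmin := fun {m} (hm : m < y) => Nat.rfind_min h hm
      have H : ∀ k, ∃ L, k ≤ y → ∀ l, L ≤ l →
          ∃ v, v ∈ qf (Nat.pair (cB B l) (Nat.pair a k)) ∧ (decide (v = 0)) =
            (if k = y then true else false) := by
        intro k
        by_cases hk : k ≤ y
        · rcases Nat.lt_or_ge k y with hk' | hk'
          · obtain ⟨v, hv, hv0⟩ := (Part.mem_map_iff _).1 (hmin hk')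
            obtain ⟨L, hL⟩ := df _ v hv
            exact ⟨L, fun _ l hl => ⟨v, hL l hl, by simp [Nat.ne_of_lt hk', hv0,
              (by omega : k ≠ y)]⟩⟩
          · have hky : k = y := le_antisymm hk hk'
            subst hky
            obtain ⟨v, hv, hv0⟩ := (Part.mem_map_iff _).1 hspec
            obtain ⟨L, hL⟩ := df _ v hv
            exact ⟨L, fun _ l hl => ⟨v, hL l hl, by simp [hv0]⟩⟩
        · exact ⟨0, fun h' => absurd h' hk⟩
      choose Lk hLk using H
      refine ⟨(Finset.range (y + 1)).sup Lk, fun l hl => ?_⟩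
      have hlk : ∀ k, k ≤ y → Lk k ≤ l :=
        fun k hk => le_trans (Finset.le_sup (Finset.mem_range.2 (Nat.lt_succ_of_le hk))) hl
      refine Nat.mem_rfind.2 ⟨?_, fun {m} hm => ?_⟩
      · obtain ⟨v, hv, hv0⟩ := hLk y le_rfl l (hlk y le_rfl)
        refine (Part.mem_map_iff _).2 ⟨v, ?_, by simpa using hv0⟩
        simpa [some_bind_pfun, Part.bind_some, hF, rearr, Nat.unpair_pair] using hv
      · obtain ⟨v, hv, hv0⟩ := hLk m (le_of_lt hm) l (hlk m (le_of_lt hm))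
        refine (Part.mem_map_iff _).2 ⟨v, ?_, by simpa [Nat.ne_of_lt hm] using hv0⟩
        simpa [some_bind_pfun, Part.bind_some, hF, rearr, Nat.unpair_pair] using hv

theorem OracleRecursiveIn.of_eq {B : Set ℕ} {f g : ℕ →. ℕ} (h : OracleRecursiveIn B f)
    (H : ∀ n, f n = g n) : OracleRecursiveIn B g := (funext H : f = g) ▸ h

theorem OracleRecursiveIn.of_partrec {B : Set ℕ} {f : ℕ →. ℕ} (h : Nat.Partrec f) :
    OracleRecursiveIn B f := by
  induction h with
  | zero => exact OracleRecursiveIn.zero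
  | succ => exact OracleRecursiveIn.succ
  | left => exact OracleRecursiveIn.left
  | right => exact OracleRecursiveIn.right
  | pair _ _ ihf ihg => exact OracleRecursiveIn.pair ihf ihg
  | comp _ _ ihf ihg => exact OracleRecursiveIn.comp ihf ihg
  | prec _ _ ihf ihg => exact OracleRecursiveIn.prec ihf ihg
  | rfind _ ih => exact OracleRecursiveIn.rfind ih

theorem OracleRecursiveIn.totalComp {B : Set ℕ} {f g : ℕ → ℕ}
    (hf : OracleRecursiveIn B fun n => Part.some (f n))
    (hg : OracleRecursiveIn B fun n => Part.some (g n)) :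
    OracleRecursiveIn B fun n => Part.some (f (g n)) :=
  (OracleRecursiveIn.comp hf hg).of_eq fun n => by simp [Part.bind_some]

theorem OracleRecursiveIn.totalPair {B : Set ℕ} {f g : ℕ → ℕ}
    (hf : OracleRecursiveIn B fun n => Part.some (f n))
    (hg : OracleRecursiveIn B fun n => Part.some (g n)) :
    OracleRecursiveIn B fun n => Part.some (Nat.pair (f n) (g n)) :=
  (OracleRecursiveIn.pair hf hg).of_eq fun n => by simp [Seq.seq]

theorem OracleRecursiveIn.someTotal {B : Set ℕ} {f : ℕ → ℕ} (h : Nat.Partrec (↑f : ℕ →. ℕ)) :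
    OracleRecursiveIn B fun n => Part.some (f n) :=
  (OracleRecursiveIn.of_partrec h).of_eq fun n => by simp [PFun.coe_val]

theorem OracleRecursiveIn.id' {B : Set ℕ} : OracleRecursiveIn B fun n => Part.some n :=
  OracleRecursiveIn.someTotal (Nat.Partrec.of_primrec Nat.Primrec.id)

theorem oracle' (B : Set ℕ) : OracleRecursiveIn B fun n => Part.some (B.indicator 1 n) :=
  (oracle_eq B) ▸ OracleRecursiveIn.oracle

theorem cB_computable (B : Set ℕ) : OracleRecursiveIn B fun l => Part.some (cB B l) := by
  have hstep : OracleRecursiveIn B fun z =>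
      Part.some (Nat.succ (Nat.pair (B.indicator 1 z.unpair.2.unpair.1)
        z.unpair.2.unpair.2)) := by
    have hπ1 : OracleRecursiveIn B fun z => Part.some z.unpair.2.unpair.1 :=
      OracleRecursiveIn.someTotal (Nat.Partrec.of_primrec
        (Primrec.nat_iff.1 (Primrec.fst.comp (Primrec.unpair.comp
          (Primrec.snd.comp Primrec.unpair)))))
    have hπ2 : OracleRecursiveIn B fun z => Part.some z.unpair.2.unpair.2 :=
      OracleRecursiveIn.someTotal (Nat.Partrec.of_primrec
        (Primrec.nat_iff.1 (Primrec.snd.comp (Primrec.unpair.comp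
          (Primrec.snd.comp Primrec.unpair)))))
    have hsucc : OracleRecursiveIn B fun n => Part.some (Nat.succ n) :=
      OracleRecursiveIn.someTotal Nat.Partrec.succ
    exact OracleRecursiveIn.totalComp hsucc
      (OracleRecursiveIn.totalPair (OracleRecursiveIn.totalComp (oracle' B) hπ1) hπ2)
  have hprec := OracleRecursiveIn.prec (OracleRecursiveIn.zero (A := B)) hstep
  have hpair0 : OracleRecursiveIn B fun l => Part.some (Nat.pair 0 l) := by
    have h0 : OracleRecursiveIn B fun _ : ℕ => Part.some 0 :=
      (OracleRecursiveIn.zero (A := B)).of_eq fun n => rfl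
    exact OracleRecursiveIn.totalPair h0 OracleRecursiveIn.id'
  have := OracleRecursiveIn.comp hprec hpair0
  refine this.of_eq fun l => ?_
  rw [Part.bind_eq_bind, Part.bind_some]
  induction l with
  | zero => simp only [Nat.unpaired, Nat.unpair_pair]; rfl
  | succ l ih =>
    have hc : cB B (l + 1) = Nat.succ (Nat.pair (B.indicator 1 l) (cB B l)) := rfl
    simp only [Nat.unpaired, Nat.unpair_pair] at ih ⊢
    rw [hc, ih, Part.bind_eq_bind, Part.bind_some]

open Nat.Partrec.Code in
theorem post {A B : Set ℕ} {p p' : ℕ →. ℕ} (hp : OracleRecursiveIn B p) (hp' : OracleRecursiveIn B p')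
    (h1 : ∀ n, n ∈ A ↔ (p n).Dom) (h2 : ∀ n, n ∉ A ↔ (p' n).Dom) :
    OracleRecursiveIn B fun n => Part.some (A.indicator 1 n) := by
  obtain ⟨q, hq, cq, dq⟩ := approx hp
  obtain ⟨q', hq', cq', dq'⟩ := approx hp'
  obtain ⟨c, hc⟩ := exists_code.1 hq
  obtain ⟨c', hc'⟩ := exists_code.1 hq'
  -- plain projections
  have pw_pr : Primrec fun x : ℕ => x.unpair.1 := Primrec.fst.comp Primrec.unpair
  have pn_pr : Primrec fun x : ℕ => x.unpair.2.unpair.1 :=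
    Primrec.fst.comp (Primrec.unpair.comp (Primrec.snd.comp Primrec.unpair))
  have pk_pr : Primrec fun x : ℕ => x.unpair.2.unpair.2.unpair.2 :=
    Primrec.snd.comp (Primrec.unpair.comp
      (Primrec.snd.comp (Primrec.unpair.comp (Primrec.snd.comp Primrec.unpair))))
  have hev : ∀ c₀ : Nat.Partrec.Code, Primrec fun x : ℕ =>
      (evaln x.unpair.2.unpair.2.unpair.2 c₀
        (Nat.pair x.unpair.1 x.unpair.2.unpair.1)).isSome := by
    intro c₀
    exact Primrec.option_isSome.comp (primrec_evaln.comp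
      ((pk_pr.pair (Primrec.const c₀)).pair (Primrec₂.natPair.comp pw_pr pn_pr)))
  set testP : ℕ → ℕ := fun x =>
    cond (evaln x.unpair.2.unpair.2.unpair.2 c
        (Nat.pair x.unpair.1 x.unpair.2.unpair.1)).isSome 0
      (cond (evaln x.unpair.2.unpair.2.unpair.2 c'
        (Nat.pair x.unpair.1 x.unpair.2.unpair.1)).isSome 0 1) with htestP
  set outP : ℕ → ℕ := fun x =>
    cond (evaln x.unpair.2.unpair.2.unpair.2 c
      (Nat.pair x.unpair.1 x.unpair.2.unpair.1)).isSome 1 0 with houtP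
  have htestP_pr : Primrec testP :=
    Primrec.cond (hev c) (Primrec.const 0)
      (Primrec.cond (hev c') (Primrec.const 0) (Primrec.const 1))
  have houtP_pr : Primrec outP := Primrec.cond (hev c) (Primrec.const 1) (Primrec.const 0)
  -- the B-computable "prepend oracle string" map
  have hS : OracleRecursiveIn B fun m => Part.some (Nat.pair (cB B m.unpair.2.unpair.1) m) := by
    refine OracleRecursiveIn.totalPair (OracleRecursiveIn.totalComp (cB_computable B) ?_) OracleRecursiveIn.id'
    exact OracleRecursiveIn.someTotal (Nat.Partrec.of_primrec (Primrec.nat_iff.1 pn_pr))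
  have hT : OracleRecursiveIn B fun m =>
      Part.some (testP (Nat.pair (cB B m.unpair.2.unpair.1) m)) :=
    OracleRecursiveIn.totalComp
      (OracleRecursiveIn.someTotal (Nat.Partrec.of_primrec (Primrec.nat_iff.1 htestP_pr))) hS
  have hO : OracleRecursiveIn B fun m =>
      Part.some (outP (Nat.pair (cB B m.unpair.2.unpair.1) m)) :=
    OracleRecursiveIn.totalComp
      (OracleRecursiveIn.someTotal (Nat.Partrec.of_primrec (Primrec.nat_iff.1 houtP_pr))) hS
  set r : ℕ →. ℕ := fun a => Nat.rfind fun t => (fun m => m = 0) <$>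
      (fun m => Part.some (testP (Nat.pair (cB B m.unpair.2.unpair.1) m))) (Nat.pair a t)
    with hr
  have hr_rec : OracleRecursiveIn B r := OracleRecursiveIn.rfind hT
  have hG : OracleRecursiveIn B fun n =>
      (Nat.pair <$> (fun k => Part.some k) n <*> r n) >>=
        fun m => Part.some (outP (Nat.pair (cB B m.unpair.2.unpair.1) m)) :=
    OracleRecursiveIn.comp hO (OracleRecursiveIn.pair OracleRecursiveIn.id' hr_rec)
  refine hG.of_eq fun n => ?_
  -- semantics
  have sound : ∀ l k y, y ∈ evaln k c (Nat.pair (cB B l) n) → n ∈ A := by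
    intro l k y hy
    have : y ∈ q (Nat.pair (cB B l) n) := by rw [← hc]; exact evaln_sound hy
    exact (h1 n).2 (Part.dom_iff_mem.2 ⟨y, cq l n y this⟩)
  have sound' : ∀ l k y, y ∈ evaln k c' (Nat.pair (cB B l) n) → n ∉ A := by
    intro l k y hy
    have : y ∈ q' (Nat.pair (cB B l) n) := by rw [← hc']; exact evaln_sound hy
    exact (h2 n).2 (Part.dom_iff_mem.2 ⟨y, cq' l n y this⟩)
  have test_zero : ∃ t : ℕ,
      testP (Nat.pair (cB B t.unpair.1) (Nat.pair n t)) = 0 := by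
    by_cases hA : n ∈ A
    · obtain ⟨y, hy⟩ := Part.dom_iff_mem.1 ((h1 n).1 hA)
      obtain ⟨L, hL⟩ := dq n y hy
      have : y ∈ eval c (Nat.pair (cB B L) n) := by rw [hc]; exact hL L le_rfl
      obtain ⟨k, hk⟩ := evaln_complete.1 this
      refine ⟨Nat.pair L k, ?_⟩
      have hsome : (evaln k c (Nat.pair (cB B L) n)).isSome :=
        Option.isSome_iff_exists.2 ⟨y, hk⟩
      simp [htestP, Nat.unpair_pair, hsome]
    · obtain ⟨y, hy⟩ := Part.dom_iff_mem.1 ((h2 n).1 hA)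
      obtain ⟨L, hL⟩ := dq' n y hy
      have : y ∈ eval c' (Nat.pair (cB B L) n) := by rw [hc']; exact hL L le_rfl
      obtain ⟨k, hk⟩ := evaln_complete.1 this
      refine ⟨Nat.pair L k, ?_⟩
      have hsome : (evaln k c' (Nat.pair (cB B L) n)).isSome :=
        Option.isSome_iff_exists.2 ⟨y, hk⟩
      cases hbool : (evaln k c (Nat.pair (cB B L) n)).isSome <;>
        simp [htestP, Nat.unpair_pair, hsome, hbool]
  have hrdom : (r n).Dom := by
    rw [hr]
    obtain ⟨t, ht⟩ := test_zero
    refine Nat.rfind_dom.2 ⟨t, ?_, fun {m} _ => ?_⟩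
    · simp [Part.mem_map_iff, Nat.unpair_pair, ht]
    · simp
  obtain ⟨t₀, ht₀⟩ := Part.dom_iff_mem.1 hrdom
  have hrn : r n = Part.some t₀ := Part.eq_some_iff.2 ht₀
  have htest0 : testP (Nat.pair (cB B t₀.unpair.1) (Nat.pair n t₀)) = 0 := by
    have hspec := Nat.rfind_spec ht₀
    simpa [Part.mem_map_iff, Nat.unpair_pair] using hspec
  have hGeq : ((Nat.pair <$> (fun k => Part.some k) n <*> r n) >>=
      fun m => Part.some (outP (Nat.pair (cB B m.unpair.2.unpair.1) m)))
      = Part.some (outP (Nat.pair (cB B t₀.unpair.1) (Nat.pair n t₀))) := by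
    rw [hrn]
    simp [Seq.seq, Nat.unpair_pair]
  rw [hGeq]
  congr 1
  rw [htestP] at htest0
  rw [houtP]
  simp only [Nat.unpair_pair] at htest0 ⊢
  cases hb : (evaln t₀.unpair.2 c (Nat.pair (cB B t₀.unpair.1) n)).isSome with
  | true =>
    obtain ⟨y, hy⟩ := Option.isSome_iff_exists.1 hb
    have hA : n ∈ A := sound t₀.unpair.1 t₀.unpair.2 y (Option.mem_def.2 hy)
    simp [hb, Set.indicator_of_mem hA]
  | false =>
    rw [hb] at htest0
    simp only [cond_false] at htest0 ⊢
    cases hb' : (evaln t₀.unpair.2 c' (Nat.pair (cB B t₀.unpair.1) n)).isSome with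
    | true =>
      obtain ⟨y, hy⟩ := Option.isSome_iff_exists.1 hb'
      have hA : n ∉ A := sound' t₀.unpair.1 t₀.unpair.2 y (Option.mem_def.2 hy)
      simp [hb, Set.indicator_of_notMem hA]
    | false => rw [hb'] at htest0; simp at htest0

/-- If `γ` is `(2, B)`-divisible and every total `A`-computable
binary function has a `B`-computable Skolem function for fixpoints modulo `γ`,
then `A ≤_T B`. -/

theorem turingLE_of_skolem (γ : ℕ → ℕ → Prop) (hγ : Equivalence γ)
    (A B : Set ℕ) (hdiv : DivisibleFin γ 2 B)
    (hsk : ∀ h : ℕ → ℕ → ℕ, OracleComputableIn₂ A h →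
      ∃ f : ℕ → ℕ, OracleComputableIn B f ∧ ∀ n : ℕ, γ (h n (f n)) (f n)) :
    TuringLE A B := by
  classical
  obtain ⟨x, X, hce, hsub, hdisj⟩ := hdiv
  -- the `A`-computable selector
  have hhc : OracleComputableIn₂ A fun n (_ : ℕ) => if A.indicator 1 n = 0 then x 1 else x 0 := by
    unfold OracleComputableIn₂ OracleComputableIn
    have hvf : Nat.Partrec ↑(fun v : ℕ => if v = 0 then x 1 else x 0) :=
      Nat.Partrec.of_primrec (Primrec.nat_iff.1
        (Primrec.ite (Primrec.eq.comp Primrec.id (Primrec.const 0))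
          (Primrec.const (x 1)) (Primrec.const (x 0))))
    have hproj : OracleRecursiveIn A fun k => Part.some k.unpair.1 :=
      OracleRecursiveIn.someTotal (Nat.Partrec.of_primrec
        (Primrec.nat_iff.1 (Primrec.fst.comp Primrec.unpair)))
    have := OracleRecursiveIn.totalComp (OracleRecursiveIn.someTotal (B := A) hvf)
      (OracleRecursiveIn.totalComp (oracle' A) hproj)
    exact this.of_eq fun k => rfl
  obtain ⟨f, hfB, hfix⟩ := hsk _ hhc
  have hx0 : ∀ n, n ∈ A → γ (x 0) (f n) := by
    intro n hA
    have hind : A.indicator 1 n = 1 := by simp [Set.indicator_of_mem hA]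
    have := hfix n
    simpa [hind] using this
  have hx1 : ∀ n, n ∉ A → γ (x 1) (f n) := by
    intro n hA
    have hind : A.indicator 1 n = 0 := by simp [Set.indicator_of_notMem hA]
    have := hfix n
    simpa [hind] using this
  obtain ⟨p₀, hp₀, hX0⟩ := hce 0
  obtain ⟨p₁, hp₁, hX1⟩ := hce 1
  have hfB' : OracleRecursiveIn B fun n => Part.some (f n) := hfB
  have hdom0 : ∀ n, ((fun n => Part.some (f n) >>= p₀) n).Dom ↔ f n ∈ X 0 := by
    intro n
    show (Part.some (f n) >>= p₀).Dom ↔ _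
    rw [some_bind_pfun, hX0]
    exact Iff.rfl
  have hdom1 : ∀ n, ((fun n => Part.some (f n) >>= p₁) n).Dom ↔ f n ∈ X 1 := by
    intro n
    show (Part.some (f n) >>= p₁).Dom ↔ _
    rw [some_bind_pfun, hX1]
    exact Iff.rfl
  have h1 : ∀ n, n ∈ A ↔ ((fun n => Part.some (f n) >>= p₀) n).Dom := by
    intro n
    rw [hdom0 n]
    constructor
    · intro hA; exact hsub 0 (hx0 n hA)
    · intro hmem
      by_contra hA
      have hcl : f n ∈ {m | γ (x 1) m} := hx1 n hA
      have := hdisj 1 0 (by decide)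
      exact Set.eq_empty_iff_forall_notMem.1 this (f n) ⟨hcl, hmem⟩
  have h2 : ∀ n, n ∉ A ↔ ((fun n => Part.some (f n) >>= p₁) n).Dom := by
    intro n
    rw [hdom1 n]
    constructor
    · intro hA; exact hsub 1 (hx1 n hA)
    · intro hmem
      by_contra hA
      have hcl : f n ∈ {m | γ (x 0) m} := hx0 n hA
      have := hdisj 0 1 (by decide)
      exact Set.eq_empty_iff_forall_notMem.1 this (f n) ⟨hcl, hmem⟩
  have := post (OracleRecursiveIn.comp hp₀ hfB') (OracleRecursiveIn.comp hp₁ hfB') h1 h2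
  exact this
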